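/- Assume the reverse Khovanskii–Teissier inequality holds on all projective varieties: for nef divisors A, B₁,…,B_k, C₁,…,C_{n−k} on an n-fold, (B₁⋯B_k·A^{n−k})·(A^k·C₁⋯C_{n−k}) ≥ (k!(n−k)!/n!)(A^n)(B₁⋯B_k·C₁⋯C_{n−k}). Then for ample A, B₁,…,B_k, C₁,…,C_{n−k} the inequality is strict. Equivalently: if equality holds with all divisors ample, then (A^n)·(B₁⋯B_{k−1}·A·C₁⋯C_{n−k}) ≤ 0, contradicting positivity of intersections of ample divisors. -/

import Mathlib

/-- **Strictness of the reverse Khovanskii–Teissier inequality for ample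
classes (key step in Theorem 3.4).**  The `n`-dimensional projective variety
is modelled by its real Néron–Severi space `M` with the symmetric
`n`-multilinear intersection form `ι`, the nef cone `Nef`, and the ample cone
`Ample ⊆ Nef` with positive intersection numbers and the openness property
`hAmpleOpen`.  Assume the reverse Khovanskii–Teissier inequality holds for
all nef classes: on `X` itself (`hRKT`), and in its restricted form on the
(`n−1`)-dimensional very ample representative of `A` (`hRKTsub`, inequality
(3.4) of the paper:
`(B₁⋯B_{k−1}·A^{n−k+1})·(A^k·C₁⋯C_{n−k}) ≥ ((k−1)!(n−k)!/(n−1)!)·(A^n)·(B₁⋯B_{k−1}·A·C₁⋯C_{n−k})`).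
Then for ample `A, B₁, …, B_k, C₁, …, C_{n−k}` the inequality is strict. -/
theorem stmt8
    (n k : ℕ) (hk1 : 1 ≤ k) (hk2 : k ≤ n - 1)
    {M : Type*} [AddCommGroup M] [Module ℝ M]
    (ι : MultilinearMap ℝ (fun _ : Fin n => M) ℝ)
    (hsymm : ∀ (v : Fin n → M) (σ : Equiv.Perm (Fin n)), ι (v ∘ σ) = ι v)
    (Nef Ample : Set M)
    (hnef : ∀ v : Fin n → M, (∀ j, v j ∈ Nef) → 0 ≤ ι v)
    (hAmpleNef : Ample ⊆ Nef)
    (hAmplePos : ∀ v : Fin n → M, (∀ j, v j ∈ Ample) → 0 < ι v)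
    (hAmpleOpen : ∀ D E : M, D ∈ Ample → E ∈ Ample →
      ∃ t : ℝ, 0 < t ∧ D - t • E ∈ Ample)
    (hRKT : ∀ (A : M) (B C : ℕ → M), A ∈ Nef →
      (∀ i < k, B i ∈ Nef) → (∀ i < n - k, C i ∈ Nef) →
      ι (fun j => if (j : ℕ) < k then B (j : ℕ) else A) *
          ι (fun j => if (j : ℕ) < k then A else C ((j : ℕ) - k)) ≥
        ((k.factorial : ℝ) * (n - k).factorial / n.factorial) *
          (ι (fun _ => A) *
            ι (fun j => if (j : ℕ) < k then B (j : ℕ) else C ((j : ℕ) - k))))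
    (hRKTsub : ∀ (A : M) (B C : ℕ → M), A ∈ Nef →
      (∀ i < k, B i ∈ Nef) → (∀ i < n - k, C i ∈ Nef) →
      ι (fun j => if (j : ℕ) < k - 1 then B (j : ℕ) else A) *
          ι (fun j => if (j : ℕ) < k then A else C ((j : ℕ) - k)) ≥
        (((k - 1).factorial : ℝ) * (n - k).factorial / (n - 1).factorial) *
          (ι (fun _ => A) *
            ι (fun j => if (j : ℕ) < k - 1 then B (j : ℕ)
                else if (j : ℕ) < k then A else C ((j : ℕ) - k))))
    (A : M) (B C : ℕ → M)
    (hA : A ∈ Ample) (hB : ∀ i < k, B i ∈ Ample) (hC : ∀ i < n - k, C i ∈ Ample) :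
    ι (fun j => if (j : ℕ) < k then B (j : ℕ) else A) *
        ι (fun j => if (j : ℕ) < k then A else C ((j : ℕ) - k)) >
      ((k.factorial : ℝ) * (n - k).factorial / n.factorial) *
        (ι (fun _ => A) *
          ι (fun j => if (j : ℕ) < k then B (j : ℕ) else C ((j : ℕ) - k))) := by

  have hn : 2 ≤ n := by omega
  by_contra hlt
  push_neg at hlt
  set P : ℝ := ι (fun j => if (j : ℕ) < k then B (j : ℕ) else A) with hPdef
  set Q : ℝ := ι (fun j => if (j : ℕ) < k then A else C ((j : ℕ) - k)) with hQdef
  set R : ℝ := ι (fun _ => A) with hRdef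
  set S : ℝ := ι (fun j => if (j : ℕ) < k then B (j : ℕ) else C ((j : ℕ) - k)) with hSdef
  set P' : ℝ := ι (fun j => if (j : ℕ) < k - 1 then B (j : ℕ) else A) with hP'def
  set T : ℝ := ι (fun j => if (j : ℕ) < k - 1 then B (j : ℕ)
      else if (j : ℕ) < k then A else C ((j : ℕ) - k)) with hTdef
  set c : ℝ := (k.factorial : ℝ) * (n - k).factorial / n.factorial with hcdef
  set c' : ℝ := ((k - 1).factorial : ℝ) * (n - k).factorial / (n - 1).factorial with hc'def
  have hAnef := hAmpleNef hA
  have hBnef : ∀ i < k, B i ∈ Nef := fun i hi => hAmpleNef (hB i hi)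
  have hCnef : ∀ i < n - k, C i ∈ Nef := fun i hi => hAmpleNef (hC i hi)
  have heq : P * Q = c * (R * S) :=
    le_antisymm hlt (hRKT A B C hAnef hBnef hCnef)
  obtain ⟨t, ht, htA⟩ := hAmpleOpen (B (k - 1)) A (hB (k - 1) (by omega)) hA
  set B' : ℕ → M := fun i => if i = k - 1 then B (k - 1) - t • A else B i with hB'def
  have hB'nef : ∀ i < k, B' i ∈ Nef := by
    intro i hi
    by_cases h : i = k - 1
    · simpa [hB'def, h] using hAmpleNef htA
    · simpa [hB'def, h] using hBnef i hi
  set idx : Fin n := ⟨k - 1, by omega⟩ with hidx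
  have hidxval : (idx : ℕ) = k - 1 := rfl
  set vP : Fin n → M := fun j => if (j : ℕ) < k then B (j : ℕ) else A with hvP
  set vS : Fin n → M := fun j => if (j : ℕ) < k then B (j : ℕ) else C ((j : ℕ) - k) with hvS
  have upd : ∀ (v : Fin n → M),
      ι (Function.update v idx (B (k - 1) - t • A))
        = ι (Function.update v idx (B (k - 1))) - t * ι (Function.update v idx A) := by
    intro v
    rw [MultilinearMap.map_update_sub, MultilinearMap.map_update_smul, smul_eq_mul]
  have ePB' : (fun j : Fin n => if (j : ℕ) < k then B' (j : ℕ) else A)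
      = Function.update vP idx (B (k - 1) - t • A) := by
    funext j
    rw [Function.update_apply]
    rcases eq_or_ne j idx with h | h
    · subst h
      rw [if_pos rfl]
      simp only [hidxval]
      rw [if_pos (by omega : k - 1 < k)]
      simp [hB'def]
    · have hj : (j : ℕ) ≠ k - 1 := fun hh => h (Fin.ext hh)
      rw [if_neg h, hvP, hB'def]
      simp only [hj, if_false]
  have ePB : Function.update vP idx (B (k - 1)) = vP := by
    funext j
    rw [Function.update_apply]
    rcases eq_or_ne j idx with h | h
    · subst h
      rw [if_pos rfl, hvP]
      simp only [hidxval]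
      rw [if_pos (by omega : k - 1 < k)]
    · rw [if_neg h]
  have ePA : Function.update vP idx A
      = fun j : Fin n => if (j : ℕ) < k - 1 then B (j : ℕ) else A := by
    funext j
    rw [Function.update_apply]
    rcases eq_or_ne j idx with h | h
    · subst h
      rw [if_pos rfl]
      simp only [hidxval]
      rw [if_neg (by omega : ¬ k - 1 < k - 1)]
    · have hj : (j : ℕ) ≠ k - 1 := fun hh => h (Fin.ext hh)
      rw [if_neg h, hvP]
      by_cases hlt1 : (j : ℕ) < k - 1
      · simp [hlt1, show (j : ℕ) < k by omega]
      · simp [hlt1, show ¬ (j : ℕ) < k by omega]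
  have eSB' : (fun j : Fin n => if (j : ℕ) < k then B' (j : ℕ) else C ((j : ℕ) - k))
      = Function.update vS idx (B (k - 1) - t • A) := by
    funext j
    rw [Function.update_apply]
    rcases eq_or_ne j idx with h | h
    · subst h
      rw [if_pos rfl]
      simp only [hidxval]
      rw [if_pos (by omega : k - 1 < k)]
      simp [hB'def]
    · have hj : (j : ℕ) ≠ k - 1 := fun hh => h (Fin.ext hh)
      rw [if_neg h, hvS, hB'def]
      simp only [hj, if_false]
  have eSB : Function.update vS idx (B (k - 1)) = vS := by
    funext j
    rw [Function.update_apply]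
    rcases eq_or_ne j idx with h | h
    · subst h
      rw [if_pos rfl, hvS]
      simp only [hidxval]
      rw [if_pos (by omega : k - 1 < k)]
    · rw [if_neg h]
  have eSA : Function.update vS idx A
      = fun j : Fin n => if (j : ℕ) < k - 1 then B (j : ℕ)
          else if (j : ℕ) < k then A else C ((j : ℕ) - k) := by
    funext j
    rw [Function.update_apply]
    rcases eq_or_ne j idx with h | h
    · subst h
      rw [if_pos rfl]
      simp only [hidxval]
      rw [if_neg (by omega : ¬ k - 1 < k - 1), if_pos (by omega : k - 1 < k)]
    · have hj : (j : ℕ) ≠ k - 1 := fun hh => h (Fin.ext hh)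
      rw [if_neg h, hvS]
      by_cases hlt1 : (j : ℕ) < k - 1
      · simp [hlt1, show (j : ℕ) < k by omega]
      · by_cases hlt2 : (j : ℕ) < k
        · exact absurd (by omega : (j : ℕ) = k - 1) hj
        · simp [hlt1, hlt2]
  have ineq1 := hRKT A B' C hAnef hB'nef hCnef
  rw [ePB', eSB', upd vP, upd vS, ePB, ePA, eSB, eSA,
    ← hPdef, ← hP'def, ← hQdef, ← hRdef, ← hSdef, ← hTdef] at ineq1
  have hsub := hRKTsub A B C hAnef hBnef hCnef
  rw [← hP'def, ← hQdef, ← hRdef, ← hTdef] at hsub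
  have hRpos : 0 < R := hAmplePos _ (fun j => hA)
  have hTpos : 0 < T := by
    rw [hTdef]
    apply hAmplePos
    intro j
    by_cases h1 : (j : ℕ) < k - 1
    · simp only [h1, if_true]
      exact hB _ (by omega)
    · by_cases h2 : (j : ℕ) < k
      · simp only [h1, h2, if_false, if_true]
        exact hA
      · simp only [h1, h2, if_false]
        exact hC _ (by omega)
  have hfacpos : ∀ m : ℕ, (0 : ℝ) < m.factorial := fun m => by
    exact_mod_cast m.factorial_pos
  have hcc : c < c' := by
    rw [hcdef, hc'def, div_lt_div_iff₀ (hfacpos n) (hfacpos (n - 1))]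
    have h1 : (k : ℝ) * (k - 1).factorial = k.factorial := by
      exact_mod_cast Nat.mul_factorial_pred (by omega : k ≠ 0)
    have h2 : (n : ℝ) * (n - 1).factorial = n.factorial := by
      exact_mod_cast Nat.mul_factorial_pred (by omega : n ≠ 0)
    have hkn : (k : ℝ) < n := by exact_mod_cast (by omega : k < n)
    rw [← h1, ← h2]
    nlinarith [mul_pos (sub_pos.2 hkn)
        (mul_pos (mul_pos (hfacpos (k - 1)) (hfacpos (n - k))) (hfacpos (n - 1)))]
  clear_value P Q R S P' T c c' B' idx vP vS
  clear ePB' ePB ePA eSB' eSB eSA upd hvP hvS hidx hidxval hB'def hB'nef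
    hRKT hRKTsub hPdef hQdef hRdef hSdef hP'def hTdef hcdef hc'def hsymm hnef
    hAmplePos hAmpleOpen hAmpleNef hA hB hC hAnef hBnef hCnef htA hlt
  have step1 : P' * Q ≤ c * (R * T) := by
    have h1 : t * (P' * Q) ≤ t * (c * (R * T)) := by nlinarith [ineq1, heq]
    exact le_of_mul_le_mul_left h1 ht
  have step2 : c' * (R * T) ≤ c * (R * T) := le_trans hsub step1
  have hRT : 0 < R * T := mul_pos hRpos hTpos
  have := mul_lt_mul_of_pos_right hcc hRT
  linarith
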